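/- (Banach–Steinhaus for multipolynomials) Let E₁, …, E_m be Banach spaces, F a normed space, and (P_j) a sequence of continuous (n₁, …, n_m)-homogeneous polynomials such that (P_j(x)) converges in F for every x ∈ E₁ × ⋯ × E_m. Then the pointwise limit P(x) := lim_j P_j(x) is a continuous (n₁, …, n_m)-homogeneous polynomial. -/

import Mathlib

open Finset Filter

section Polarization

noncomputable def esgn (b : Bool) : ℝ := if b then 1 else -1

lemma esgn_abs (b : Bool) : |esgn b| = 1 := by cases b <;> simp [esgn]

variable {ν : ℕ}

def cnt (r : Fin ν → Option (Fin ν)) (k : Fin ν) : ℕ :=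
  (univ.filter fun i => r i = some k).card

lemma coef_eq (r : Fin ν → Option (Fin ν)) :
    (∑ ε : Fin ν → Bool, (∏ t, esgn (ε t)) *
      ∏ i, (r i).elim (1:ℝ) (fun k => esgn (ε k)))
    = if ∀ k, Odd (cnt r k) then (2:ℝ)^ν else 0 := by
  classical
  have h1 : ∀ ε : Fin ν → Bool,
      (∏ i, (r i).elim (1:ℝ) (fun k => esgn (ε k))) = ∏ k, esgn (ε k) ^ cnt r k := by
    intro ε
    rw [← Finset.prod_fiberwise_of_maps_to (t := (univ : Finset (Option (Fin ν))))
      (g := r) (fun i _ => mem_univ _) (fun i => (r i).elim (1:ℝ) (fun k => esgn (ε k)))]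
    rw [Fintype.prod_option]
    have hnone : ∏ i ∈ univ.filter (fun i => r i = none),
        (r i).elim (1:ℝ) (fun k => esgn (ε k)) = 1 :=
      Finset.prod_eq_one fun i hi => by
        rw [(mem_filter.mp hi).2]; rfl
    rw [hnone, one_mul]
    refine Finset.prod_congr rfl fun k _ => ?_
    have hfib : ∀ i ∈ univ.filter (fun i => r i = some k),
        (r i).elim (1:ℝ) (fun k => esgn (ε k)) = esgn (ε k) := fun i hi => by
      rw [(mem_filter.mp hi).2]; rfl
    rw [Finset.prod_congr rfl hfib, Finset.prod_const]
    rfl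
  have h2 : ∀ ε : Fin ν → Bool,
      (∏ t, esgn (ε t)) * ∏ k, esgn (ε k) ^ cnt r k = ∏ k, esgn (ε k) ^ (1 + cnt r k) := by
    intro ε
    rw [← Finset.prod_mul_distrib]
    exact Finset.prod_congr rfl fun k _ => by rw [pow_add, pow_one]
  simp_rw [h1, h2]
  have h3 : ∑ ε : Fin ν → Bool, ∏ k, esgn (ε k) ^ (1 + cnt r k)
      = ∏ k, ∑ b : Bool, esgn b ^ (1 + cnt r k) := by
    rw [Finset.prod_univ_sum (fun _ => (univ : Finset Bool))
      (fun k b => esgn b ^ (1 + cnt r k)), Fintype.piFinset_univ]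
  rw [h3]
  have h4 : ∀ k, (∑ b : Bool, esgn b ^ (1 + cnt r k))
      = if Odd (cnt r k) then (2:ℝ) else 0 := by
    intro k
    rw [Fintype.sum_bool]
    by_cases h : Odd (cnt r k)
    · have he : Even (1 + cnt r k) := by
        rcases h with ⟨t, ht⟩; exact ⟨t+1, by omega⟩
      rw [show esgn true = 1 from rfl, show esgn false = -1 from rfl, one_pow,
        he.neg_one_pow, if_pos h]
      norm_num
    · have ho : Odd (1 + cnt r k) := by
        rcases Nat.not_odd_iff_even.mp h with ⟨t, ht⟩; exact ⟨t, by omega⟩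
      rw [show esgn true = 1 from rfl, show esgn false = -1 from rfl, one_pow,
        ho.neg_one_pow, if_neg h]
      norm_num
  rw [Finset.prod_congr rfl fun k _ => h4 k]
  by_cases hall : ∀ k, Odd (cnt r k)
  · rw [if_pos hall, Finset.prod_congr rfl fun k (_ : k ∈ univ) => if_pos (hall k),
      Finset.prod_const]
    simp
  · rw [if_neg hall]
    push_neg at hall
    obtain ⟨k, hk⟩ := hall
    exact Finset.prod_eq_zero (mem_univ k) (if_neg hk)

lemma odd_iff_perm (r : Fin ν → Option (Fin ν)) :
    (∀ k, Odd (cnt r k)) ↔ ∃ σ : Equiv.Perm (Fin ν), r = fun i => some (σ i) := by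
  constructor
  · intro hodd
    have hsum : ∑ k, cnt r k ≤ ν := by
      have h1 : ∀ i : Fin ν, (∑ k, if r i = some k then 1 else 0) ≤ 1 := by
        intro i
        cases h : r i with
        | none => simp
        | some k0 => simp [Finset.sum_ite_eq]
      calc ∑ k, cnt r k = ∑ k : Fin ν, ∑ i : Fin ν, if r i = some k then 1 else 0 := by
            refine Finset.sum_congr rfl fun k _ => ?_
            rw [cnt, Finset.card_filter]
        _ = ∑ i : Fin ν, ∑ k : Fin ν, if r i = some k then 1 else 0 := Finset.sum_comm
        _ ≤ ∑ i : Fin ν, 1 := Finset.sum_le_sum fun i _ => h1 i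
        _ = ν := by simp
    have hone : ∀ k, cnt r k = 1 := by
      by_contra hc
      push_neg at hc
      obtain ⟨k0, hk0⟩ := hc
      have h2 : ∀ k : Fin ν, k ∈ univ → 1 ≤ cnt r k := fun k _ => (hodd k).pos
      have h3 : (1 : ℕ) < cnt r k0 := by
        rcases hodd k0 with ⟨t, ht⟩; omega
      have := Finset.sum_lt_sum h2 ⟨k0, mem_univ _, h3⟩
      simp only [Finset.sum_const, card_univ, Fintype.card_fin, smul_eq_mul, mul_one] at this
      omega
    have hsing : ∀ k : Fin ν, ∃ i, univ.filter (fun i => r i = some k) = {i} := by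
      intro k
      exact Finset.card_eq_one.mp (hone k)
    choose τ hτ using hsing
    have hval : ∀ k, r (τ k) = some k := by
      intro k
      have : τ k ∈ univ.filter (fun i => r i = some k) := by rw [hτ k]; exact mem_singleton_self _
      exact (mem_filter.mp this).2
    have hinj : Function.Injective τ := by
      intro k k' h
      have := (hval k).symm.trans (h ▸ hval k')
      exact Option.some_inj.mp this
    have hbij := Finite.injective_iff_bijective.mp hinj
    refine ⟨(Equiv.ofBijective τ hbij).symm, funext fun i => ?_⟩
    have : τ ((Equiv.ofBijective τ hbij).symm i) = i := (Equiv.ofBijective τ hbij).apply_symm_apply i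
    rw [← this, hval]
    simp
  · rintro ⟨σ, rfl⟩
    intro k
    have : (univ.filter fun i => (some (σ i) : Option (Fin ν)) = some k) = {σ.symm k} := by
      ext i
      simp [Equiv.eq_symm_apply, eq_comm]
    rw [cnt, this, Finset.card_singleton]
    exact odd_one

variable {G F : Type*} [NormedAddCommGroup G] [NormedSpace ℝ G]
  [NormedAddCommGroup F] [NormedSpace ℝ F]

lemma polar (A : MultilinearMap ℝ (fun _ : Fin ν => G) F) (c : G) (w : Fin ν → G) :
    ∑ ε : Fin ν → Bool, (∏ t, esgn (ε t)) • A (fun _ => c + ∑ k, esgn (ε k) • w k)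
    = (2 ^ ν : ℝ) • ∑ σ : Equiv.Perm (Fin ν), A (fun t => w (σ t)) := by
  classical
  set v : Option (Fin ν) → G := fun o => o.elim c w with hv
  have hrw : ∀ ε : Fin ν → Bool, (fun _ : Fin ν => c + ∑ k, esgn (ε k) • w k)
      = fun _ : Fin ν => ∑ o : Option (Fin ν), ((o.elim (1:ℝ) (fun k => esgn (ε k))) • v o) := by
    intro ε; funext i
    rw [Fintype.sum_option]
    simp [v]
  have hexp : ∀ ε : Fin ν → Bool,
      A (fun _ => c + ∑ k, esgn (ε k) • w k)
      = ∑ r : Fin ν → Option (Fin ν),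
          (∏ i, (r i).elim (1:ℝ) (fun k => esgn (ε k))) • A (fun i => v (r i)) := by
    intro ε
    rw [hrw ε, MultilinearMap.map_sum]
    exact Finset.sum_congr rfl fun r _ => by rw [MultilinearMap.map_smul_univ]
  calc ∑ ε : Fin ν → Bool, (∏ t, esgn (ε t)) • A (fun _ => c + ∑ k, esgn (ε k) • w k)
      = ∑ ε : Fin ν → Bool, ∑ r : Fin ν → Option (Fin ν),
          ((∏ t, esgn (ε t)) * ∏ i, (r i).elim (1:ℝ) (fun k => esgn (ε k)))
            • A (fun i => v (r i)) := by
        refine Finset.sum_congr rfl fun ε _ => ?_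
        rw [hexp ε, Finset.smul_sum]
        exact Finset.sum_congr rfl fun r _ => by rw [smul_smul]
    _ = ∑ r : Fin ν → Option (Fin ν),
          (∑ ε : Fin ν → Bool, (∏ t, esgn (ε t)) * ∏ i, (r i).elim (1:ℝ) (fun k => esgn (ε k)))
            • A (fun i => v (r i)) := by
        rw [Finset.sum_comm]
        exact Finset.sum_congr rfl fun r _ => (Finset.sum_smul).symm
    _ = ∑ r : Fin ν → Option (Fin ν),
          (if ∀ k, Odd (cnt r k) then (2:ℝ)^ν else 0) • A (fun i => v (r i)) := by
        exact Finset.sum_congr rfl fun r _ => by rw [coef_eq]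
    _ = ∑ r ∈ univ.filter (fun r : Fin ν → Option (Fin ν) => ∀ k, Odd (cnt r k)),
          (2^ν : ℝ) • A (fun i => v (r i)) := by
        rw [Finset.sum_filter]
        refine Finset.sum_congr rfl fun r _ => ?_
        by_cases h : ∀ k, Odd (cnt r k) <;> simp [h]
    _ = ∑ σ : Equiv.Perm (Fin ν), (2^ν : ℝ) • A (fun t => w (σ t)) := by
        have himg : univ.filter (fun r : Fin ν → Option (Fin ν) => ∀ k, Odd (cnt r k))
            = univ.image (fun σ : Equiv.Perm (Fin ν) => fun i => some (σ i)) := by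
          ext r
          simp only [mem_filter, mem_univ, true_and, mem_image]
          rw [odd_iff_perm]
          exact ⟨fun ⟨σ, h⟩ => ⟨σ, h.symm⟩, fun ⟨σ, h⟩ => ⟨σ, h.symm⟩⟩
        rw [himg, Finset.sum_image]
        · rfl
        · intro σ _ σ' _ h
          exact Equiv.ext fun i => Option.some_inj.mp (congrFun h i)
    _ = (2 ^ ν : ℝ) • ∑ σ : Equiv.Perm (Fin ν), A (fun t => w (σ t)) := by
        rw [Finset.smul_sum]

noncomputable def symZ (A : MultilinearMap ℝ (fun _ : Fin ν => G) F) :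
    MultilinearMap ℝ (fun _ : Fin ν => G) F :=
  ∑ σ : Equiv.Perm (Fin ν), A.domDomCongr σ

lemma symZ_apply (A : MultilinearMap ℝ (fun _ : Fin ν => G) F) (w : Fin ν → G) :
    symZ A w = ∑ σ : Equiv.Perm (Fin ν), A (fun t => w (σ t)) := by
  rw [symZ, MultilinearMap.sum_apply]
  rfl

lemma symZ_diag (A : MultilinearMap ℝ (fun _ : Fin ν => G) F) (y : G) :
    symZ A (fun _ => y) = (Nat.factorial ν) • A (fun _ => y) := by
  rw [symZ_apply]
  rw [Finset.sum_const, card_univ, Fintype.card_perm, Fintype.card_fin]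

lemma ml_bound (D : MultilinearMap ℝ (fun _ : Fin ν => G) F) {K ρ : ℝ} (hρ : 0 < ρ)
    (h : ∀ w : Fin ν → G, (∀ k, ‖w k‖ ≤ ρ) → ‖D w‖ ≤ K) (w : Fin ν → G) :
    ‖D w‖ ≤ (K / ρ ^ ν) * ∏ k, ‖w k‖ := by
  have hK : 0 ≤ K := le_trans (norm_nonneg _) (h 0 (fun k => by simp [hρ.le]))
  by_cases hz : ∃ k, w k = 0
  · obtain ⟨k, hk⟩ := hz
    rw [D.map_coord_zero k hk, norm_zero]
    have : ∏ k, ‖w k‖ = 0 := Finset.prod_eq_zero (mem_univ k) (by rw [hk, norm_zero])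
    rw [this, mul_zero]
  · push_neg at hz
    have hpos : ∀ k, 0 < ‖w k‖ := fun k => norm_pos_iff.mpr (hz k)
    set w' : Fin ν → G := fun k => (ρ / ‖w k‖) • w k with hw'
    have hw'norm : ∀ k, ‖w' k‖ = ρ := by
      intro k
      rw [hw']
      simp only [norm_smul, Real.norm_eq_abs, abs_div, abs_of_pos hρ,
        abs_of_pos (hpos k)]
      rw [div_mul_cancel₀ _ (hpos k).ne']
    have h1 : D w' = (∏ k, ρ / ‖w k‖) • D w := by
      rw [hw', D.map_smul_univ]
    have h2 : ‖D w'‖ ≤ K := h w' fun k => (hw'norm k).le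
    rw [h1, norm_smul, Real.norm_eq_abs] at h2
    have hprodpos : 0 < ∏ k, ρ / ‖w k‖ :=
      Finset.prod_pos fun k _ => div_pos hρ (hpos k)
    rw [abs_of_pos hprodpos] at h2
    have hsplit : ∏ k, ρ / ‖w k‖ = ρ ^ ν / ∏ k, ‖w k‖ := by
      rw [Finset.prod_div_distrib, Finset.prod_const]
      simp
    rw [hsplit] at h2
    have hprod : 0 < ∏ k, ‖w k‖ := Finset.prod_pos fun k _ => hpos k
    calc ‖D w‖ = (ρ ^ ν / (∏ k, ‖w k‖) * ‖D w‖) * ((∏ k, ‖w k‖) / ρ ^ ν) := by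
          field_simp
      _ ≤ K * ((∏ k, ‖w k‖) / ρ ^ ν) := by
          apply mul_le_mul_of_nonneg_right h2
          positivity
      _ = K / ρ ^ ν * ∏ k, ‖w k‖ := by ring

lemma polar' (A : MultilinearMap ℝ (fun _ : Fin ν => G) F) (c : G) (w : Fin ν → G) :
    (2 ^ ν : ℝ) • symZ A w
    = ∑ ε : Fin ν → Bool, (∏ t, esgn (ε t)) • A (fun _ => c + ∑ k, esgn (ε k) • w k) := by
  rw [symZ_apply, polar]

/-- norm bound on the symmetrization from a bound on the diagonal near a point `c`. -/
lemma symZ_norm_le (A : MultilinearMap ℝ (fun _ : Fin ν => G) F) (f : G → F)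
    (hf : ∀ v, f v = A (fun _ => v)) {c : G} {ρ M : ℝ} (hρ : 0 < ρ)
    (hbd : ∀ v : G, ‖v‖ ≤ (ν : ℝ) * ρ → ‖f (c + v)‖ ≤ M)
    (w : Fin ν → G) (hw : ∀ k, ‖w k‖ ≤ ρ) :
    ‖symZ A w‖ ≤ M := by
  have key := polar' A c w
  have hsumnorm : ∀ ε : Fin ν → Bool, ‖∑ k, esgn (ε k) • w k‖ ≤ (ν : ℝ) * ρ := by
    intro ε
    calc ‖∑ k, esgn (ε k) • w k‖ ≤ ∑ k, ‖esgn (ε k) • w k‖ := norm_sum_le _ _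
      _ ≤ ∑ _k : Fin ν, ρ := Finset.sum_le_sum fun k _ => by
          rw [norm_smul, Real.norm_eq_abs, esgn_abs, one_mul]; exact hw k
      _ = (ν : ℝ) * ρ := by simp [mul_comm]
  have h2 : ‖(2 ^ ν : ℝ) • symZ A w‖ ≤ (2:ℝ)^ν * M := by
    rw [key]
    calc ‖∑ ε : Fin ν → Bool, (∏ t, esgn (ε t)) • A (fun _ => c + ∑ k, esgn (ε k) • w k)‖
        ≤ ∑ ε : Fin ν → Bool, ‖(∏ t, esgn (ε t)) • A (fun _ => c + ∑ k, esgn (ε k) • w k)‖ :=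
          norm_sum_le _ _
      _ ≤ ∑ _ε : Fin ν → Bool, M := by
          refine Finset.sum_le_sum fun ε _ => ?_
          rw [norm_smul, Real.norm_eq_abs, Finset.abs_prod,
            Finset.prod_congr rfl fun t _ => esgn_abs (ε t), Finset.prod_const_one, one_mul,
            ← hf]
          exact hbd _ (hsumnorm ε)
      _ = (2:ℝ)^ν * M := by
          rw [Finset.sum_const, card_univ]
          simp [mul_comm]
  rw [norm_smul, Real.norm_eq_abs, abs_of_pos (by positivity : (0:ℝ) < 2^ν)] at h2
  exact le_of_mul_le_mul_left h2 (by positivity)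

lemma sec_bound (A : MultilinearMap ℝ (fun _ : Fin ν => G) F) (f : G → F)
    (hf : ∀ v, f v = A (fun _ => v)) {c : G} {r M : ℝ} (hr : 0 < r)
    (hbd : ∀ v : G, ‖v‖ ≤ r → ‖f (c + v)‖ ≤ M) (v : G) :
    ‖f v‖ ≤ (M * ((ν + 1 : ℝ) / r) ^ ν) * ‖v‖ ^ ν := by
  set ρ : ℝ := r / (ν + 1) with hρdef
  have hρ : 0 < ρ := by positivity
  have hbd' : ∀ u : G, ‖u‖ ≤ (ν : ℝ) * ρ → ‖f (c + u)‖ ≤ M := by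
    intro u hu
    refine hbd u (hu.trans ?_)
    have h1 : (0:ℝ) < (ν:ℝ) + 1 := by positivity
    rw [hρdef, ← mul_div_assoc, div_le_iff₀ h1]
    nlinarith [hr.le, Nat.cast_nonneg (α := ℝ) ν]
  have hml := ml_bound (symZ A) hρ
    (fun w hw => symZ_norm_le A f hf hρ hbd' w hw)
  have hdiag := symZ_diag A v
  have h1 : ‖symZ A (fun _ => v)‖ = (Nat.factorial ν : ℝ) * ‖f v‖ := by
    rw [hdiag, ← hf, ← Nat.cast_smul_eq_nsmul ℝ, norm_smul, Real.norm_eq_abs,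
      abs_of_nonneg (by positivity : (0:ℝ) ≤ (Nat.factorial ν : ℝ))]
  have h2 := hml (fun _ => v)
  rw [h1, Finset.prod_const, card_univ, Fintype.card_fin] at h2
  have hfact : (1:ℝ) ≤ (Nat.factorial ν : ℝ) := by
    exact_mod_cast Nat.one_le_iff_ne_zero.mpr (Nat.factorial_ne_zero ν)
  have h3 : ‖f v‖ ≤ (M / ρ ^ ν) * ‖v‖ ^ ν := by
    nlinarith [norm_nonneg (f v), pow_nonneg (norm_nonneg v) ν,
      mul_nonneg (norm_nonneg (f v)) (sub_nonneg.mpr hfact)]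
  calc ‖f v‖ ≤ (M / ρ ^ ν) * ‖v‖ ^ ν := h3
    _ = (M * ((ν + 1 : ℝ) / r) ^ ν) * ‖v‖ ^ ν := by
        rw [hρdef, div_pow, div_pow, div_div_eq_mul_div]
        ring

lemma sec_lip (A : MultilinearMap ℝ (fun _ : Fin ν => G) F) (f : G → F)
    (hf : ∀ v, f v = A (fun _ => v)) {M R : ℝ} (hM : 0 ≤ M) (hR : 1 ≤ R)
    (hbd : ∀ v : G, ‖f v‖ ≤ M * ‖v‖ ^ ν) (a b : G) (ha : ‖a‖ ≤ R) (hb : ‖b‖ ≤ R) :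
    ‖f a - f b‖ ≤ (M * ((ν : ℝ) + 1) ^ ν * ν * R ^ ν) * ‖a - b‖ := by
  have hR0 : (0:ℝ) < R := lt_of_lt_of_le one_pos hR
  -- bound on symZ A on the R-shell
  have hshell : ∀ w : Fin ν → G, (∀ k, ‖w k‖ ≤ R) → ‖symZ A w‖ ≤ M * (((ν:ℝ)+1) * R) ^ ν := by
    intro w hw
    refine symZ_norm_le A f hf (c := 0) hR0 ?_ w hw
    intro v hv
    rw [zero_add]
    calc ‖f v‖ ≤ M * ‖v‖ ^ ν := hbd v
      _ ≤ M * (((ν:ℝ)+1) * R) ^ ν := by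
          apply mul_le_mul_of_nonneg_left _ hM
          apply pow_le_pow_left₀ (norm_nonneg v)
          calc ‖v‖ ≤ (ν : ℝ) * R := hv
            _ ≤ ((ν:ℝ)+1) * R := by nlinarith
  have hml : ∀ w : Fin ν → G, ‖symZ A w‖ ≤ (M * ((ν:ℝ)+1) ^ ν) * ∏ k, ‖w k‖ := by
    intro w
    have := ml_bound (symZ A) hR0 hshell w
    calc ‖symZ A w‖ ≤ (M * (((ν:ℝ)+1) * R) ^ ν / R ^ ν) * ∏ k, ‖w k‖ := this
      _ = (M * ((ν:ℝ)+1) ^ ν) * ∏ k, ‖w k‖ := by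
          rw [mul_pow, mul_div_assoc, mul_div_assoc, div_self (by positivity : (R:ℝ)^ν ≠ 0),
            mul_one]
  -- telescoping
  set g : ℕ → F := fun t => symZ A (fun k : Fin ν => if (k : ℕ) < t then b else a) with hg
  have hg0 : g 0 = symZ A (fun _ => a) :=
    congrArg (symZ A) (funext fun k => by simp)
  have hgν : g ν = symZ A (fun _ => b) :=
    congrArg (symZ A) (funext fun k => by simp [k.isLt])
  have hstep : ∀ t ∈ Finset.range ν, ‖g t - g (t+1)‖ ≤
      (M * ((ν:ℝ)+1) ^ ν * R ^ ν) * ‖a - b‖ := by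
    intro t ht
    have htν : t < ν := Finset.mem_range.mp ht
    set t' : Fin ν := ⟨t, htν⟩ with ht'
    set base : Fin ν → G := fun k => if (k : ℕ) < t then b else a with hbase
    have e1 : (fun k : Fin ν => if (k : ℕ) < t then b else a) = Function.update base t' a := by
      funext k
      rcases eq_or_ne k t' with rfl | hk
      · simp [Function.update_self, base, ht']
      · rw [Function.update_of_ne hk]
    have e2 : (fun k : Fin ν => if (k : ℕ) < t + 1 then b else a) = Function.update base t' b := by
      funext k
      rcases eq_or_ne k t' with rfl | hk
      · simp [base, ht']
      · rw [Function.update_of_ne hk, hbase]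
        have hkt : (k : ℕ) ≠ t := fun h => hk (Fin.ext h)
        by_cases h : (k:ℕ) < t
        · simp [h, Nat.lt_succ_of_lt h]
        · have : ¬ (k:ℕ) < t + 1 := by omega
          simp [h, this]
    have e3 : g t - g (t+1) = symZ A (Function.update base t' (a - b)) := by
      show symZ A (fun k : Fin ν => if (k : ℕ) < t then b else a)
          - symZ A (fun k : Fin ν => if (k : ℕ) < t + 1 then b else a) = _
      rw [e1, e2, (symZ A).map_update_sub]
    rw [e3]
    calc ‖symZ A (Function.update base t' (a - b))‖
        ≤ (M * ((ν:ℝ)+1) ^ ν) * ∏ k, ‖Function.update base t' (a - b) k‖ := hml _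
      _ ≤ (M * ((ν:ℝ)+1) ^ ν) * (‖a - b‖ * R ^ ν) := by
          apply mul_le_mul_of_nonneg_left _ (by positivity)
          have hupd : ∀ k, ‖Function.update base t' (a - b) k‖
              = Function.update (fun k => ‖base k‖) t' ‖a - b‖ k := by
            intro k
            rcases eq_or_ne k t' with rfl | hk
            · simp
            · rw [Function.update_of_ne hk, Function.update_of_ne hk]
          rw [Finset.prod_congr rfl fun k _ => hupd k,
            Finset.prod_update_of_mem (mem_univ t')]
          apply mul_le_mul_of_nonneg_left _ (norm_nonneg _)
          calc ∏ k ∈ univ \ {t'}, ‖base k‖ ≤ R ^ (univ \ {t'} : Finset (Fin ν)).card := by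
                rw [← Finset.prod_const]
                refine Finset.prod_le_prod (fun k _ => norm_nonneg _) fun k _ => ?_
                rw [hbase]
                by_cases h : (k:ℕ) < t <;> simp [h, ha, hb]
            _ ≤ R ^ ν := by
                apply pow_le_pow_right₀ hR
                calc (univ \ {t'} : Finset (Fin ν)).card ≤ (univ : Finset (Fin ν)).card :=
                      Finset.card_le_card (Finset.sdiff_subset)
                  _ = ν := by simp
      _ = (M * ((ν:ℝ)+1) ^ ν * R ^ ν) * ‖a - b‖ := by ring
  have htel : (Nat.factorial ν) • (f a - f b) = ∑ t ∈ Finset.range ν, (g t - g (t+1)) := by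
    rw [Finset.sum_range_sub' g, hg0, hgν, symZ_diag, symZ_diag, ← hf, ← hf, smul_sub]
  have hnorm : ‖(Nat.factorial ν) • (f a - f b)‖ ≤
      (ν : ℝ) * ((M * ((ν:ℝ)+1) ^ ν * R ^ ν) * ‖a - b‖) := by
    rw [htel]
    calc ‖∑ t ∈ Finset.range ν, (g t - g (t+1))‖ ≤ ∑ t ∈ Finset.range ν, ‖g t - g (t+1)‖ :=
          norm_sum_le _ _
      _ ≤ ∑ _t ∈ Finset.range ν, (M * ((ν:ℝ)+1) ^ ν * R ^ ν) * ‖a - b‖ :=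
          Finset.sum_le_sum hstep
      _ = (ν : ℝ) * ((M * ((ν:ℝ)+1) ^ ν * R ^ ν) * ‖a - b‖) := by
          rw [Finset.sum_const, Finset.card_range]
          simp [mul_comm]
  have hfact : (1:ℝ) ≤ (Nat.factorial ν : ℝ) := by
    exact_mod_cast Nat.one_le_iff_ne_zero.mpr (Nat.factorial_ne_zero ν)
  have hnorm2 : ‖(Nat.factorial ν) • (f a - f b)‖ = (Nat.factorial ν : ℝ) * ‖f a - f b‖ := by
    rw [← Nat.cast_smul_eq_nsmul ℝ, norm_smul, Real.norm_eq_abs,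
      abs_of_nonneg (by positivity : (0:ℝ) ≤ (Nat.factorial ν : ℝ))]
  rw [hnorm2] at hnorm
  have : ‖f a - f b‖ ≤ (Nat.factorial ν : ℝ) * ‖f a - f b‖ := by
    nlinarith [norm_nonneg (f a - f b)]
  calc ‖f a - f b‖ ≤ (Nat.factorial ν : ℝ) * ‖f a - f b‖ := this
    _ ≤ (ν : ℝ) * ((M * ((ν:ℝ)+1) ^ ν * R ^ ν) * ‖a - b‖) := hnorm
    _ = (M * ((ν : ℝ) + 1) ^ ν * ν * R ^ ν) * ‖a - b‖ := by ring

lemma limit_is_poly (fj : ℕ → G → F) (f : G → F)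
    (hA : ∀ j, ∃ A : MultilinearMap ℝ (fun _ : Fin ν => G) F, ∀ v, fj j v = A (fun _ => v))
    (hlim : ∀ v, Tendsto (fun j => fj j v) atTop (nhds (f v))) :
    ∃ A : MultilinearMap ℝ (fun _ : Fin ν => G) F, ∀ v, f v = A (fun _ => v) := by
  choose A hAspec using hA
  set LB : (Fin ν → G) → F := fun w =>
    (2 ^ ν : ℝ)⁻¹ • ∑ ε : Fin ν → Bool,
      (∏ t, esgn (ε t)) • f (∑ k, esgn (ε k) • w k) with hLB
  have hj : ∀ j w, symZ (A j) w = (2 ^ ν : ℝ)⁻¹ • ∑ ε : Fin ν → Bool,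
      (∏ t, esgn (ε t)) • fj j (∑ k, esgn (ε k) • w k) := by
    intro j w
    have h := polar' (A j) 0 w
    have h2 : ∀ ε : Fin ν → Bool, A j (fun _ => (0 : G) + ∑ k, esgn (ε k) • w k)
        = fj j (∑ k, esgn (ε k) • w k) := by
      intro ε; rw [zero_add, ← hAspec]
    rw [Finset.sum_congr rfl fun ε _ => by rw [h2 ε]] at h
    rw [← h, inv_smul_smul₀ (by positivity : ((2:ℝ)^ν) ≠ 0)]
  have htend : ∀ w, Tendsto (fun j => symZ (A j) w) atTop (nhds (LB w)) := by
    intro w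
    have hsum : Tendsto (fun j => ∑ ε : Fin ν → Bool,
        (∏ t, esgn (ε t)) • fj j (∑ k, esgn (ε k) • w k)) atTop
        (nhds (∑ ε : Fin ν → Bool, (∏ t, esgn (ε t)) • f (∑ k, esgn (ε k) • w k))) :=
      tendsto_finset_sum _ fun ε _ => (hlim _).const_smul _
    have := hsum.const_smul ((2 ^ ν : ℝ)⁻¹)
    simp only [← hj] at this
    exact this
  have hdiagtend : ∀ v : G, Tendsto (fun j => symZ (A j) (fun _ => v)) atTop
      (nhds ((Nat.factorial ν : ℝ) • f v)) := by
    intro v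
    have : ∀ j, symZ (A j) (fun _ => v) = (Nat.factorial ν : ℝ) • fj j v := by
      intro j
      rw [symZ_diag, ← hAspec, Nat.cast_smul_eq_nsmul]
    simp only [this]
    exact (hlim v).const_smul _
  have hdiag : ∀ v : G, LB (fun _ => v) = (Nat.factorial ν : ℝ) • f v := fun v =>
    tendsto_nhds_unique (htend _) (hdiagtend v)
  have hBadd : ∀ (m : Fin ν → G) (i : Fin ν) (x y : G),
      LB (Function.update m i (x + y))
        = LB (Function.update m i x) + LB (Function.update m i y) := by
    intro m i x y
    refine tendsto_nhds_unique (htend _) ?_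
    have heq : ∀ j, symZ (A j) (Function.update m i (x + y))
        = symZ (A j) (Function.update m i x) + symZ (A j) (Function.update m i y) := fun j =>
      (symZ (A j)).map_update_add m i x y
    simp only [heq]
    exact (htend _).add (htend _)
  have hBsmul : ∀ (m : Fin ν → G) (i : Fin ν) (c : ℝ) (x : G),
      LB (Function.update m i (c • x)) = c • LB (Function.update m i x) := by
    intro m i c x
    refine tendsto_nhds_unique (htend _) ?_
    have heq : ∀ j, symZ (A j) (Function.update m i (c • x))
        = c • symZ (A j) (Function.update m i x) := fun j =>
      (symZ (A j)).map_update_smul m i c x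
    simp only [heq]
    exact (htend _).const_smul _
  refine ⟨(Nat.factorial ν : ℝ)⁻¹ • {
      toFun := LB
      map_update_add' := by
        intro inst m i x y
        rw [Subsingleton.elim inst (instDecidableEqFin ν)]
        exact hBadd m i x y
      map_update_smul' := by
        intro inst m i c x
        rw [Subsingleton.elim inst (instDecidableEqFin ν)]
        exact hBsmul m i c x }, ?_⟩
  intro v
  show f v = (Nat.factorial ν : ℝ)⁻¹ • LB (fun _ => v)
  rw [hdiag, inv_smul_smul₀]
  exact_mod_cast Nat.factorial_ne_zero ν

end Polarization

/-- `P : E₁ × ⋯ × E_m → F` is an `(n₁, …, n_m)`-homogeneous polynomial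
(multipolynomial): separately, in each variable `i`, it is an `n i`-homogeneous
polynomial, i.e. the diagonal of some `n i`-linear map. -/
def IsMultiPoly {m : ℕ} {E : Fin m → Type*} [∀ i, NormedAddCommGroup (E i)]
    [∀ i, NormedSpace ℝ (E i)] {F : Type*} [NormedAddCommGroup F] [NormedSpace ℝ F]
    (n : Fin m → ℕ) (P : (∀ i, E i) → F) : Prop :=
  ∀ (i : Fin m) (x : ∀ i, E i), ∃ A : MultilinearMap ℝ (fun _ : Fin (n i) => E i) F,
    ∀ y : E i, P (Function.update x i y) = A (fun _ => y)

section Main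
variable {m : ℕ} {E : Fin m → Type*} [∀ i, NormedAddCommGroup (E i)]
    [∀ i, NormedSpace ℝ (E i)]
    {F : Type*} [NormedAddCommGroup F] [NormedSpace ℝ F]

set_option synthInstance.maxHeartbeats 1000000 in
theorem baire_step [∀ i, CompleteSpace (E i)] (n : Fin m → ℕ) (Q : ℕ → (∀ i, E i) → F) (P : (∀ i, E i) → F)
    (hcont : ∀ j, Continuous (Q j))
    (hlim : ∀ x : ∀ i, E i,
      Filter.Tendsto (fun j => Q j x) Filter.atTop (nhds (P x))) :
    ∃ (x₀ : ∀ i, E i) (r : ℝ) (k : ℕ), 0 < r ∧ ∀ y ∈ Metric.ball x₀ r, ‖P y‖ ≤ k := by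
  set S : ℕ → Set (∀ i, E i) := fun k => {x | ∀ j, ‖Q j x‖ ≤ k} with hS
  have hSclosed : ∀ k, IsClosed (S k) := by
    intro k
    have : S k = ⋂ j, {x | ‖Q j x‖ ≤ k} := by
      ext x; simp [hS, Set.mem_iInter]
    rw [this]
    exact isClosed_iInter fun j => isClosed_le (hcont j).norm continuous_const
  have hScover : (⋃ k, S k) = Set.univ := by
    rw [Set.eq_univ_iff_forall]
    intro x
    have hbdd : BddAbove (Set.range fun j => ‖Q j x‖) :=
      ((hlim x).norm).bddAbove_range
    obtain ⟨c, hc⟩ := hbdd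
    refine Set.mem_iUnion.mpr ⟨⌈c⌉₊, fun j => ?_⟩
    calc ‖Q j x‖ ≤ c := hc (Set.mem_range_self j)
      _ ≤ ⌈c⌉₊ := Nat.le_ceil c
  obtain ⟨k, hk⟩ := nonempty_interior_of_iUnion_of_closed hSclosed hScover
  obtain ⟨x₀, hx₀⟩ := hk
  obtain ⟨r, hr, hball⟩ := Metric.isOpen_iff.mp isOpen_interior x₀ hx₀
  refine ⟨x₀, r, k, hr, fun y hy => ?_⟩
  have hy' : y ∈ S k := interior_subset (hball hy)
  exact le_of_tendsto (hlim y).norm (Filter.Eventually.of_forall fun j => hy' j)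

theorem global_bound (n : Fin m → ℕ) (P : (∀ i, E i) → F)
    (hP1 : IsMultiPoly n P) (x₀ : ∀ i, E i) (r : ℝ) (k : ℕ) (hr : 0 < r)
    (hball : ∀ y ∈ Metric.ball x₀ r, ‖P y‖ ≤ k) :
    ∃ C : ℝ, 0 ≤ C ∧ ∀ x, ‖P x‖ ≤ C * ∏ i, ‖x i‖ ^ n i := by
  have key : ∀ s : ℕ, s ≤ m → ∃ C : ℝ, 0 ≤ C ∧ ∀ x : ∀ i, E i,
      (∀ i : Fin m, s ≤ (i : ℕ) → ‖x i - x₀ i‖ ≤ r / 2) →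
      ‖P x‖ ≤ C * ∏ i ∈ univ.filter (fun i : Fin m => (i : ℕ) < s), ‖x i‖ ^ n i := by
    intro s
    induction s with
    | zero =>
      intro _
      refine ⟨k, Nat.cast_nonneg k, fun x hx => ?_⟩
      have hxball : x ∈ Metric.ball x₀ r := by
        rw [Metric.mem_ball, dist_pi_lt_iff hr]
        intro i
        calc dist (x i) (x₀ i) = ‖x i - x₀ i‖ := dist_eq_norm _ _
          _ ≤ r/2 := hx i (Nat.zero_le _)
          _ < r := by linarith
      have hfilter : univ.filter (fun i : Fin m => (i:ℕ) < 0) = ∅ := by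
        apply Finset.filter_false_of_mem; intro i _; omega
      rw [hfilter, Finset.prod_empty, mul_one]
      exact hball x hxball
    | succ s ih =>
      intro hs1
      have hs : s < m := hs1
      obtain ⟨C, hC0, hCbd⟩ := ih (le_of_lt hs)
      set i₀ : Fin m := ⟨s, hs⟩ with hi₀
      refine ⟨C * ((n i₀ + 1 : ℝ) / (r/2)) ^ (n i₀), by positivity, fun x hx => ?_⟩
      obtain ⟨A, hA⟩ := hP1 i₀ x
      set f : E i₀ → F := fun v => P (Function.update x i₀ v) with hfdef
      set M := C * ∏ i ∈ univ.filter (fun i : Fin m => (i:ℕ) < s), ‖x i‖ ^ n i with hM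
      have hMbd : ∀ v : E i₀, ‖v‖ ≤ r/2 → ‖f (x₀ i₀ + v)‖ ≤ M := by
        intro v hv
        have hcond : ∀ i : Fin m, s ≤ (i:ℕ) →
            ‖Function.update x i₀ (x₀ i₀ + v) i - x₀ i‖ ≤ r / 2 := by
          intro i hi
          rcases eq_or_ne i i₀ with rfl | hne
          · rw [Function.update_self]
            simpa using hv
          · rw [Function.update_of_ne hne]
            have hne' : (i : ℕ) ≠ s := fun h => hne (Fin.ext h)
            exact hx i (by omega)
        have hres := hCbd (Function.update x i₀ (x₀ i₀ + v)) hcond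
        have hprod : ∏ i ∈ univ.filter (fun i : Fin m => (i:ℕ) < s),
            ‖Function.update x i₀ (x₀ i₀ + v) i‖ ^ n i
            = ∏ i ∈ univ.filter (fun i : Fin m => (i:ℕ) < s), ‖x i‖ ^ n i := by
          refine Finset.prod_congr rfl fun i hi => ?_
          have : (i : ℕ) < s := (Finset.mem_filter.mp hi).2
          have hne : i ≠ i₀ := fun h => by rw [h] at this; simp [hi₀] at this
          rw [Function.update_of_ne hne]
        rw [hprod] at hres
        exact hres
      have hsec := sec_bound A f (fun v => hA v) (by linarith : (0:ℝ) < r/2) hMbd (x i₀)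
      have hfx : f (x i₀) = P x := by
        rw [hfdef]
        simp only []
        rw [Function.update_eq_self]
      have hM0 : 0 ≤ M := by
        rw [hM]
        have : (0:ℝ) ≤ ∏ i ∈ univ.filter (fun i : Fin m => (i:ℕ) < s), ‖x i‖ ^ n i :=
          Finset.prod_nonneg fun i _ => by positivity
        positivity
      have hfilter : univ.filter (fun i : Fin m => (i:ℕ) < s + 1)
          = insert i₀ (univ.filter (fun i : Fin m => (i:ℕ) < s)) := by
        ext i
        simp only [Finset.mem_filter, Finset.mem_univ, true_and, Finset.mem_insert]
        constructor
        · intro h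
          rcases eq_or_ne i i₀ with rfl | hne
          · exact Or.inl rfl
          · have : (i:ℕ) ≠ s := fun hh => hne (Fin.ext hh)
            exact Or.inr (by omega)
        · rintro (rfl | h)
          · simp [hi₀]
          · omega
      have hnotmem : i₀ ∉ univ.filter (fun i : Fin m => (i:ℕ) < s) := by
        simp [hi₀]
      rw [hfilter, Finset.prod_insert hnotmem]
      calc ‖P x‖ = ‖f (x i₀)‖ := by rw [hfx]
        _ ≤ (M * ((n i₀ + 1 : ℝ) / (r/2)) ^ (n i₀)) * ‖x i₀‖ ^ (n i₀) := hsec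
        _ = C * ((n i₀ + 1 : ℝ) / (r/2)) ^ (n i₀) *
            (‖x i₀‖ ^ n i₀ * ∏ i ∈ univ.filter (fun i : Fin m => (i:ℕ) < s), ‖x i‖ ^ n i) := by
            rw [hM]; ring
  obtain ⟨C, hC0, hCbd⟩ := key m le_rfl
  refine ⟨C, hC0, fun x => ?_⟩
  have hcond : ∀ i : Fin m, m ≤ (i:ℕ) → ‖x i - x₀ i‖ ≤ r/2 := fun i hi =>
    absurd hi (Nat.not_le.mpr i.isLt)
  have hfilter : univ.filter (fun i : Fin m => (i:ℕ) < m) = univ := by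
    apply Finset.filter_true_of_mem; intro i _; exact i.isLt
  have := hCbd x hcond
  rwa [hfilter] at this

theorem cont_of_bound (n : Fin m → ℕ) (P : (∀ i, E i) → F)
    (hP1 : IsMultiPoly n P) (C : ℝ) (hC0 : 0 ≤ C)
    (hCbd : ∀ x, ‖P x‖ ≤ C * ∏ i, ‖x i‖ ^ n i) : Continuous P := by
  rw [continuous_iff_continuousAt]
  intro z
  set R : ℝ := ‖z‖ + 1 with hR
  have hR1 : (1:ℝ) ≤ R := by rw [hR]; have := norm_nonneg z; linarith
  set D : ℝ := ∏ i, (‖z i‖ + 1) ^ n i with hD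
  have hD0 : 0 ≤ D := Finset.prod_nonneg fun i _ => by positivity
  have hD1 : (1:ℝ) ≤ D := by
    rw [hD]
    calc (1:ℝ) = ∏ _i : Fin m, 1 := by simp
      _ ≤ ∏ i, (‖z i‖ + 1) ^ n i := Finset.prod_le_prod (by norm_num) fun i _ =>
          one_le_pow₀ (by linarith [norm_nonneg (z i)])
  set Lterm : ℕ → ℝ := fun s =>
    if h : s < m then
      C * D * ((n ⟨s, h⟩ : ℝ) + 1) ^ (n ⟨s, h⟩) * (n ⟨s, h⟩) * R ^ (n ⟨s, h⟩)
    else 0 with hLterm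
  have hLterm0 : ∀ s, 0 ≤ Lterm s := by
    intro s
    simp only [hLterm]
    by_cases h : s < m
    · rw [dif_pos h]; positivity
    · rw [dif_neg h]
  set L : ℝ := ∑ s ∈ Finset.range m, Lterm s with hL
  have hmain : ∀ x : ∀ i, E i, ‖x - z‖ ≤ 1 → ‖P x - P z‖ ≤ L * ‖x - z‖ := by
    intro x hxz
    have hxi : ∀ i, ‖x i - z i‖ ≤ ‖x - z‖ := by
      intro i
      have := norm_le_pi_norm (x - z) i
      simpa using this
    have hxiR : ∀ i, ‖x i‖ ≤ ‖z i‖ + 1 := by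
      intro i
      calc ‖x i‖ = ‖z i + (x i - z i)‖ := by rw [add_sub_cancel]
        _ ≤ ‖z i‖ + ‖x i - z i‖ := norm_add_le _ _
        _ ≤ ‖z i‖ + 1 := by have := (hxi i).trans hxz; linarith
    have hziR : ∀ i, ‖z i‖ ≤ ‖z‖ := fun i => norm_le_pi_norm z i
    set y : ℕ → ∀ i, E i := fun t i => if (i : ℕ) < t then x i else z i with hy
    have hy0 : y 0 = z := by funext i; simp [hy]
    have hym : y m = x := by funext i; simp [hy, i.isLt]
    have hyiR : ∀ t i, ‖y t i‖ ≤ ‖z i‖ + 1 := by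
      intro t i
      rw [hy]
      by_cases h : (i:ℕ) < t
      · simp only [if_pos h]; exact hxiR i
      · simp only [if_neg h]; linarith [norm_nonneg (z i)]
    have htel : P x - P z = ∑ s ∈ Finset.range m, (P (y (s+1)) - P (y s)) := by
      rw [Finset.sum_range_sub (fun s => P (y s)), hy0, hym]
    have hterm : ∀ s ∈ Finset.range m, ‖P (y (s+1)) - P (y s)‖ ≤ Lterm s * ‖x - z‖ := by
      intro s hs
      have hsm : s < m := Finset.mem_range.mp hs
      set i₀ : Fin m := ⟨s, hsm⟩ with hi₀
      obtain ⟨A, hA⟩ := hP1 i₀ (y s)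
      set f : E i₀ → F := fun v => P (Function.update (y s) i₀ v) with hf
      have hys : y s i₀ = z i₀ := by rw [hy]; simp [hi₀]
      have hup1 : Function.update (y s) i₀ (x i₀) = y (s+1) := by
        funext i
        rcases eq_or_ne i i₀ with rfl | hne
        · rw [Function.update_self, hy]
          simp [hi₀]
        · rw [Function.update_of_ne hne]
          simp only [hy]
          have hneq : (i : ℕ) ≠ s := fun h => hne (Fin.ext h)
          by_cases h : (i:ℕ) < s
          · simp [h, Nat.lt_succ_of_lt h]
          · have h2 : ¬ (i:ℕ) < s + 1 := by omega
            simp [h, h2]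
      have hup2 : Function.update (y s) i₀ (z i₀) = y s := by
        rw [← hys, Function.update_eq_self]
      have hbdf : ∀ v : E i₀, ‖f v‖ ≤ (C * D) * ‖v‖ ^ (n i₀) := by
        intro v
        calc ‖f v‖ ≤ C * ∏ i, ‖Function.update (y s) i₀ v i‖ ^ n i := hCbd _
          _ ≤ (C * D) * ‖v‖ ^ (n i₀) := by
            have hupd : ∀ i, ‖Function.update (y s) i₀ v i‖ ^ n i
                = Function.update (fun i => ‖y s i‖ ^ n i) i₀ (‖v‖ ^ n i₀) i := by
              intro i
              rcases eq_or_ne i i₀ with rfl | hne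
              · rw [Function.update_self, Function.update_self]
              · rw [Function.update_of_ne hne, Function.update_of_ne hne]
            rw [Finset.prod_congr rfl fun i _ => hupd i,
              Finset.prod_update_of_mem (mem_univ i₀)]
            have hrest : ∏ i ∈ univ \ {i₀}, ‖y s i‖ ^ n i ≤ D := by
              calc ∏ i ∈ univ \ {i₀}, ‖y s i‖ ^ n i
                  ≤ ∏ i ∈ univ \ {i₀}, (‖z i‖ + 1) ^ n i := by
                    refine Finset.prod_le_prod (fun i _ => by positivity) fun i _ => ?_
                    exact pow_le_pow_left₀ (norm_nonneg _) (hyiR s i) _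
                _ ≤ D := by
                  rw [hD, Finset.prod_eq_mul_prod_sdiff_singleton_of_mem (mem_univ i₀)
                    (fun i => (‖z i‖ + 1) ^ n i)]
                  have hrest : (0:ℝ) ≤ ∏ i ∈ univ \ {i₀}, (‖z i‖ + 1) ^ n i :=
                    Finset.prod_nonneg fun i _ => by positivity
                  have h1 : (1:ℝ) ≤ (‖z i₀‖ + 1) ^ n i₀ :=
                    one_le_pow₀ (by linarith [norm_nonneg (z i₀)])
                  nlinarith
            have ha0 : (0:ℝ) ≤ ‖v‖ ^ n i₀ := by positivity
            have hb0 : (0:ℝ) ≤ ∏ i ∈ univ \ {i₀}, ‖y s i‖ ^ n i :=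
              Finset.prod_nonneg fun i _ => by positivity
            nlinarith [mul_le_mul_of_nonneg_left hrest (mul_nonneg hC0 ha0)]
      have heq1 : P (y (s+1)) = f (x i₀) := by rw [hf]; simp only []; rw [hup1]
      have heq2 : P (y s) = f (z i₀) := by rw [hf]; simp only []; rw [hup2]
      have hxa : ‖x i₀‖ ≤ R := by rw [hR]; linarith [hxiR i₀, hziR i₀]
      have hza : ‖z i₀‖ ≤ R := by rw [hR]; linarith [hziR i₀]
      have hlip := sec_lip A f (fun v => hA v) (by positivity) hR1 hbdf (x i₀) (z i₀) hxa hza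
      calc ‖P (y (s+1)) - P (y s)‖ = ‖f (x i₀) - f (z i₀)‖ := by rw [heq1, heq2]
        _ ≤ (C * D * ((n i₀ : ℝ) + 1) ^ (n i₀) * (n i₀) * R ^ (n i₀)) * ‖x i₀ - z i₀‖ := hlip
        _ ≤ Lterm s * ‖x - z‖ := by
            simp only [hLterm]
            rw [dif_pos hsm]
            apply mul_le_mul_of_nonneg_left (hxi i₀) (by positivity)
    calc ‖P x - P z‖ = ‖∑ s ∈ Finset.range m, (P (y (s+1)) - P (y s))‖ := by rw [htel]
      _ ≤ ∑ s ∈ Finset.range m, ‖P (y (s+1)) - P (y s)‖ := norm_sum_le _ _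
      _ ≤ ∑ s ∈ Finset.range m, Lterm s * ‖x - z‖ := Finset.sum_le_sum hterm
      _ = L * ‖x - z‖ := by rw [hL, Finset.sum_mul]
  have hev : ∀ᶠ x in nhds z, ‖P x - P z‖ ≤ L * ‖x - z‖ := by
    filter_upwards [Metric.closedBall_mem_nhds z one_pos] with x hx
    exact hmain x (by rwa [Metric.mem_closedBall, dist_eq_norm] at hx)
  rw [ContinuousAt, tendsto_iff_norm_sub_tendsto_zero]
  apply squeeze_zero' (Filter.Eventually.of_forall fun x => norm_nonneg _) hev
  have htendsto : Tendsto (fun x : ∀ i, E i => L * ‖x - z‖) (nhds z) (nhds (L * ‖z - z‖)) :=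
    (((continuous_id.sub continuous_const).norm).tendsto z).const_mul L
  simpa using htendsto

end Main

/-- Banach–Steinhaus for multipolynomials. -/

theorem stmt9 {m : ℕ} {E : Fin m → Type*} [∀ i, NormedAddCommGroup (E i)]
    [∀ i, NormedSpace ℝ (E i)] [∀ i, CompleteSpace (E i)]
    {F : Type*} [NormedAddCommGroup F] [NormedSpace ℝ F]
    (n : Fin m → ℕ) (Q : ℕ → (∀ i, E i) → F) (P : (∀ i, E i) → F)
    (hpoly : ∀ j, IsMultiPoly n (Q j)) (hcont : ∀ j, Continuous (Q j))
    (hlim : ∀ x : ∀ i, E i,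
      Filter.Tendsto (fun j => Q j x) Filter.atTop (nhds (P x))) :
    IsMultiPoly n P ∧ Continuous P := by
  have hP1 : IsMultiPoly n P := fun i x =>
    limit_is_poly (fun j v => Q j (Function.update x i v))
      (fun v => P (Function.update x i v))
      (fun j => hpoly j i x) (fun v => hlim (Function.update x i v))
  obtain ⟨x₀, r, k, hr, hball⟩ := baire_step n Q P hcont hlim
  obtain ⟨C, hC0, hCbd⟩ := global_bound n P hP1 x₀ r k hr hball
  exact ⟨hP1, cont_of_bound n P hP1 C hC0 hCbd⟩
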